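/- Let (e_α) be a Q-orthonormal basis of m adapted to the decomposition (each e_α lies in some m_i), set d_i := dim m_i and [ijk] := Σ_{e_α∈m_i, e_β∈m_j} |⁅e_α,e_β⁆_{m_k}|²_Q. Suppose c_i ≥ 0 satisfies Σ_{e_α, e_{α'} ∈ m_i} |⁅e_α,e_{α'}⁆_𝔥|²_Q = d_i c_i, and define b_i by the relation d_i b_i = 2 d_i c_i + Σ_{j,k=1}^{ℓ} [ijk]. Then for every i, the Ricci trace identity holds: Σ_{j=1}^{ℓ} Σ_{e_α∈m_i, e_β∈m_j} K(e_α, e_β) = d_i b_i/(2λ_i) − (1/2) Σ_{j,k=1}^{ℓ} [ijk] λ_k/(λ_i λ_j) + (1/4) Σ_{j,k=1}^{ℓ} [ijk] λ_i/(λ_j λ_k). -/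

import Mathlib

open scoped RealInnerProductSpace

variable {𝔤 : Type*} [NormedAddCommGroup 𝔤] [InnerProductSpace ℝ 𝔤] [FiniteDimensional ℝ 𝔤]

/-- The invariant metric `g` on `m = 𝔥ᗮ` determined by the orthogonal decomposition
`m = m_1 ⊕ ⋯ ⊕ m_ℓ` and the positive coefficients `λ_i`:  `g(X,Y) = λ_i Q(X,Y)` for
`X, Y ∈ m_i` and `g(m_i, m_j) = 0` for `i ≠ j`. -/
noncomputable def gmet {ℓ : ℕ} (m : Fin ℓ → Submodule ℝ 𝔤) (lam : Fin ℓ → ℝ) (x y : 𝔤) : ℝ :=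
  ∑ i, lam i * ⟪(Submodule.orthogonalProjectionOnto (m i) x : 𝔤), (Submodule.orthogonalProjectionOnto (m i) y : 𝔤)⟫

/-- The sectional curvature expression `K(X,Y)` for `X ∈ m_i`, `Y ∈ m_j`:
with `X̃ = X/√λ_i`, `Ỹ = Y/√λ_j`,
`K(X,Y) = −(3/4)|⁅X̃,Ỹ⁆_m|²_g − (1/2) g(⁅X̃,⁅X̃,Ỹ⁆⁆_m, Ỹ) − (1/2) g(⁅Ỹ,⁅Ỹ,X̃⁆⁆_m, X̃)
  + |U(X̃,Ỹ)|²_g − g(U(X̃,X̃), U(Ỹ,Ỹ))`. -/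
noncomputable def Kcurv {ℓ : ℕ} (𝔥 : Submodule ℝ 𝔤) (m : Fin ℓ → Submodule ℝ 𝔤)
    (lam : Fin ℓ → ℝ) (L : 𝔤 →ₗ[ℝ] 𝔤 →ₗ[ℝ] 𝔤) (U : 𝔤 → 𝔤 → 𝔤) (i j : Fin ℓ) (X Y : 𝔤) : ℝ :=
  let Xt := (Real.sqrt (lam i))⁻¹ • X;
  let Yt := (Real.sqrt (lam j))⁻¹ • Y;
  let Pm : 𝔤 → 𝔤 := (fun z => (Submodule.orthogonalProjectionOnto 𝔥ᗮ z : 𝔤));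
  -(3/4) * gmet m lam (Pm (L Xt Yt)) (Pm (L Xt Yt))
    - (1/2) * gmet m lam (Pm (L Xt (L Xt Yt))) Yt
    - (1/2) * gmet m lam (Pm (L Yt (L Yt Xt))) Xt
    + gmet m lam (U Xt Yt) (U Xt Yt)
    - gmet m lam (U Xt Xt) (U Yt Yt)


set_option maxHeartbeats 1600000

section RicciAux

private lemma inner_orthogonalProjection_left_eq_right (K : Submodule ℝ 𝔤) (u v : 𝔤) :
    ⟪(Submodule.orthogonalProjectionOnto K u : 𝔤), v⟫
      = ⟪u, (Submodule.orthogonalProjectionOnto K v : 𝔤)⟫ :=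
  K.inner_starProjection_left_eq_right u v

private lemma orthogonalProjection_add_orthogonalProjection_orthogonal (K : Submodule ℝ 𝔤)
    (w : 𝔤) : (Submodule.orthogonalProjectionOnto K w : 𝔤)
      + (Submodule.orthogonalProjectionOnto Kᗮ w : 𝔤) = w :=
  K.starProjection_add_starProjection_orthogonal w

private lemma orthogonalProjection_orthogonalProjection_of_le {U V : Submodule ℝ 𝔤}
    (h : U ≤ V) (x : 𝔤) :
    Submodule.orthogonalProjectionOnto U (Submodule.orthogonalProjectionOnto V x : 𝔤)
      = Submodule.orthogonalProjectionOnto U x :=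
  Submodule.orthogonalProjectionOnto_starProjection_of_le h x

private lemma eq_orthogonalProjection_of_mem_of_inner_eq_zero {K : Submodule ℝ 𝔤} {u v : 𝔤}
    (hvm : v ∈ K) (hvo : ∀ w ∈ K, ⟪u - v, w⟫ = 0) :
    (Submodule.orthogonalProjectionOnto K u : 𝔤) = v :=
  K.eq_starProjection_of_mem_of_inner_eq_zero hvm hvo

set_option linter.unusedSectionVars false in
private lemma lanti (L : 𝔤 →ₗ[ℝ] 𝔤 →ₗ[ℝ] 𝔤) (halt : ∀ x : 𝔤, L x x = 0) (x y : 𝔤) :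
    L x y = - L y x := by
  have h0 := halt (x + y)
  simp only [map_add, LinearMap.add_apply, halt x, halt y, zero_add, add_zero] at h0
  rw [add_comm] at h0; exact eq_neg_of_add_eq_zero_left h0

set_option linter.unusedSectionVars false in
private lemma lcyc (L : 𝔤 →ₗ[ℝ] 𝔤 →ₗ[ℝ] 𝔤) (halt : ∀ x : 𝔤, L x x = 0)
    (had : ∀ x y z : 𝔤, ⟪L x y, z⟫ + ⟪y, L x z⟫ = 0) (x y z : 𝔤) :
    ⟪L x y, z⟫ = ⟪L y z, x⟫ := by
  have h1 := had x y z
  have h2 := had z y x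
  rw [lanti L halt x z, inner_neg_right] at h1
  rw [lanti L halt z y, inner_neg_left] at h2
  linarith

private lemma projm_self {K : Submodule ℝ 𝔤} {x : 𝔤} (hx : x ∈ K) :
    (Submodule.orthogonalProjectionOnto K x : 𝔤) = x := by
  simpa using congrArg Subtype.val (Submodule.orthogonalProjectionOnto_mem_subspace_eq_self (⟨x, hx⟩ : K))

private lemma proj_zero_of_orth {K : Submodule ℝ 𝔤} {x : 𝔤} (h : ∀ w ∈ K, ⟪w, x⟫ = 0) :
    (Submodule.orthogonalProjectionOnto K x : 𝔤) = 0 := by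
  have : x ∈ Kᗮ := (Submodule.mem_orthogonal K x).mpr h
  simp [Submodule.orthogonalProjectionOnto_apply_of_mem_orthogonal this]

variable {ℓ : ℕ} {m : Fin ℓ → Submodule ℝ 𝔤} {lam : Fin ℓ → ℝ}

private lemma proj_other (hm_orth : ∀ i j, i ≠ j → ∀ x ∈ m i, ∀ y ∈ m j, ⟪x, y⟫ = 0)
    {j k : Fin ℓ} (hjk : j ≠ k) {z : 𝔤} (hz : z ∈ m j) :
    (Submodule.orthogonalProjectionOnto (m k) z : 𝔤) = 0 :=
  proj_zero_of_orth fun w hw => hm_orth k j hjk.symm w hw z hz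

private lemma gmet_right_single (hm_orth : ∀ i j, i ≠ j → ∀ x ∈ m i, ∀ y ∈ m j, ⟪x, y⟫ = 0)
    {k : Fin ℓ} {z : 𝔤} (hz : z ∈ m k) (u : 𝔤) :
    gmet m lam u z = lam k * ⟪u, z⟫ := by
  unfold gmet
  rw [Finset.sum_eq_single k]
  · rw [projm_self hz, inner_orthogonalProjection_left_eq_right, projm_self hz]
  · intro i _ hik
    rw [proj_other hm_orth (Ne.symm hik) hz, inner_zero_right, mul_zero]
  · simp

set_option linter.unusedSectionVars false in
private lemma sum_proj_eq (hm_orth : ∀ i j, i ≠ j → ∀ x ∈ m i, ∀ y ∈ m j, ⟪x, y⟫ = 0)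
    {𝔥 : Submodule ℝ 𝔤} (hm_span : (⨆ i, m i) = 𝔥ᗮ)
    {x : 𝔤} (hx : x ∈ 𝔥ᗮ) :
    ∑ k, (Submodule.orthogonalProjectionOnto (m k) x : 𝔤) = x := by
  rw [← hm_span] at hx
  refine Submodule.iSup_induction m (motive := fun y => ∑ k, (Submodule.orthogonalProjectionOnto (m k) y : 𝔤) = y)
    hx ?_ ?_ ?_
  · intro j y hy
    rw [Finset.sum_eq_single j]
    · exact projm_self hy
    · intro i _ hij; exact proj_other hm_orth (Ne.symm hij) hy
    · simp
  · simp
  · intro a b ha hb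
    simp only [map_add, Submodule.coe_add, Finset.sum_add_distrib, ha, hb]

private lemma norm_sq_decomp (hm_orth : ∀ i j, i ≠ j → ∀ x ∈ m i, ∀ y ∈ m j, ⟪x, y⟫ = 0)
    {𝔥 : Submodule ℝ 𝔤} (hm_le : ∀ i, m i ≤ 𝔥ᗮ) (hm_span : (⨆ i, m i) = 𝔥ᗮ) (x : 𝔤) :
    ‖x‖ ^ 2 = ‖(Submodule.orthogonalProjectionOnto 𝔥 x : 𝔤)‖ ^ 2
      + ∑ k, ‖(Submodule.orthogonalProjectionOnto (m k) x : 𝔤)‖ ^ 2 := by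
  set u : 𝔤 := (Submodule.orthogonalProjectionOnto 𝔥ᗮ x : 𝔤) with hu
  have hxeq : (Submodule.orthogonalProjectionOnto 𝔥 x : 𝔤) + u = x :=
    orthogonalProjection_add_orthogonalProjection_orthogonal 𝔥 x
  have humem : u ∈ 𝔥ᗮ := (Submodule.orthogonalProjectionOnto 𝔥ᗮ x).2
  have hcross : ⟪(Submodule.orthogonalProjectionOnto 𝔥 x : 𝔤), u⟫ = 0 :=
    humem (Submodule.orthogonalProjectionOnto 𝔥 x : 𝔤) (Submodule.orthogonalProjectionOnto 𝔥 x).2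
  have hpyth : ‖x‖ ^ 2 = ‖(Submodule.orthogonalProjectionOnto 𝔥 x : 𝔤)‖ ^ 2 + ‖u‖ ^ 2 := by
    calc ‖x‖ ^ 2 = ‖(Submodule.orthogonalProjectionOnto 𝔥 x : 𝔤) + u‖ ^ 2 := by rw [hxeq]
      _ = _ := by rw [norm_add_sq_real, hcross]; ring
  have hproj : ∀ k, (Submodule.orthogonalProjectionOnto (m k) u : 𝔤) = (Submodule.orthogonalProjectionOnto (m k) x : 𝔤) := by
    intro k
    rw [hu, orthogonalProjection_orthogonalProjection_of_le (hm_le k)]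
  have husum : ‖u‖ ^ 2 = ∑ k, ‖(Submodule.orthogonalProjectionOnto (m k) x : 𝔤)‖ ^ 2 := by
    calc ‖u‖ ^ 2 = ⟪u, u⟫ := (real_inner_self_eq_norm_sq u).symm
      _ = ⟪∑ k, (Submodule.orthogonalProjectionOnto (m k) u : 𝔤), ∑ k, (Submodule.orthogonalProjectionOnto (m k) u : 𝔤)⟫ := by
          rw [sum_proj_eq hm_orth hm_span humem]
      _ = ∑ k, ∑ l, ⟪(Submodule.orthogonalProjectionOnto (m k) u : 𝔤), (Submodule.orthogonalProjectionOnto (m l) u : 𝔤)⟫ := by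
          rw [sum_inner]; exact Finset.sum_congr rfl fun k _ => by rw [inner_sum]
      _ = ∑ k, ‖(Submodule.orthogonalProjectionOnto (m k) u : 𝔤)‖ ^ 2 := by
          refine Finset.sum_congr rfl fun k _ => ?_
          rw [Finset.sum_eq_single k]
          · exact real_inner_self_eq_norm_sq _
          · intro l _ hlk
            exact hm_orth k l (Ne.symm hlk) _ (Submodule.orthogonalProjectionOnto (m k) u).2 _
              (Submodule.orthogonalProjectionOnto (m l) u).2
          · simp
      _ = ∑ k, ‖(Submodule.orthogonalProjectionOnto (m k) x : 𝔤)‖ ^ 2 :=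
          Finset.sum_congr rfl fun k _ => by rw [hproj]
  rw [hpyth, husum]

private lemma proj_basis {K : Submodule ℝ 𝔤} {n : ℕ} {e : Fin n → 𝔤}
    (he_mem : ∀ α, e α ∈ K)
    (he_span : Submodule.span ℝ (Set.range e) = K)
    (he_on : ∀ α β, ⟪e α, e β⟫ = if α = β then 1 else 0) (z : 𝔤) :
    (Submodule.orthogonalProjectionOnto K z : 𝔤) = ∑ γ, ⟪z, e γ⟫ • e γ := by
  refine eq_orthogonalProjection_of_mem_of_inner_eq_zero
    (Submodule.sum_mem _ fun γ _ => Submodule.smul_mem _ _ (he_mem γ)) ?_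
  intro w hw
  have key : ∀ γ, ⟪z - ∑ γ', ⟪z, e γ'⟫ • e γ', e γ⟫ = 0 := by
    intro γ
    rw [inner_sub_left, sum_inner]
    have : ∀ γ' ∈ Finset.univ, ⟪(⟪z, e γ'⟫ : ℝ) • e γ', e γ⟫
        = if γ' = γ then ⟪z, e γ⟫ else 0 := by
      intro γ' _
      rw [real_inner_smul_left, he_on]
      by_cases h : γ' = γ <;> simp [h]
    rw [Finset.sum_congr rfl this, Finset.sum_ite_eq' Finset.univ γ]
    simp
  rw [← he_span] at hw
  induction hw using Submodule.span_induction with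
  | mem w hwr => obtain ⟨γ, rfl⟩ := hwr; exact key γ
  | zero => simp
  | add a b _ _ ha hb => rw [inner_add_right, ha, hb]; ring
  | smul r a _ ha => rw [real_inner_smul_right, ha]; ring

private lemma normsq_proj_basis {K : Submodule ℝ 𝔤} {n : ℕ} {e : Fin n → 𝔤}
    (he_mem : ∀ α, e α ∈ K)
    (he_span : Submodule.span ℝ (Set.range e) = K)
    (he_on : ∀ α β, ⟪e α, e β⟫ = if α = β then 1 else 0) (z : 𝔤) :
    ‖(Submodule.orthogonalProjectionOnto K z : 𝔤)‖ ^ 2 = ∑ γ, ⟪z, e γ⟫ ^ 2 := by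
  rw [proj_basis he_mem he_span he_on z, ← real_inner_self_eq_norm_sq, sum_inner]
  refine Finset.sum_congr rfl fun γ _ => ?_
  have : ∀ γ' ∈ Finset.univ, ⟪(⟪z, e γ⟫ : ℝ) • e γ, (⟪z, e γ'⟫ : ℝ) • e γ'⟫
      = if γ' = γ then ⟪z, e γ⟫ ^ 2 else 0 := by
    intro γ' _
    rw [real_inner_smul_left, real_inner_smul_right, he_on]
    by_cases h : γ' = γ
    · subst h; simp; ring
    · simp [Ne.symm h, h]
  rw [inner_sum, Finset.sum_congr rfl this, Finset.sum_ite_eq' Finset.univ γ]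
  simp

set_option linter.unusedSectionVars false in
private lemma lswap (L : 𝔤 →ₗ[ℝ] 𝔤 →ₗ[ℝ] 𝔤) (halt : ∀ x : 𝔤, L x x = 0)
    (had : ∀ x y z : 𝔤, ⟪L x y, z⟫ + ⟪y, L x z⟫ = 0) (a b c : 𝔤) :
    ⟪L a c, b⟫ = -⟪L a b, c⟫ := by
  rw [lcyc L halt had a c b, lcyc L halt had c b a, lanti L halt b a, inner_neg_left]

private lemma Tsymm_aux (L : 𝔤 →ₗ[ℝ] 𝔤 →ₗ[ℝ] 𝔤) (halt : ∀ x : 𝔤, L x x = 0)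
    (had : ∀ x y z : 𝔤, ⟪L x y, z⟫ + ⟪y, L x z⟫ = 0)
    (d : Fin ℓ → ℕ) (e : ∀ i, Fin (d i) → 𝔤)
    (he_mem : ∀ i α, e i α ∈ m i)
    (he_span : ∀ i, Submodule.span ℝ (Set.range (e i)) = m i)
    (he_on : ∀ i (α β : Fin (d i)), ⟪e i α, e i β⟫ = if α = β then 1 else 0)
    (i j k : Fin ℓ) :
    (∑ α, ∑ β, ‖(Submodule.orthogonalProjectionOnto (m k) (L (e i α) (e j β)) : 𝔤)‖ ^ 2)
      = ∑ α, ∑ γ, ‖(Submodule.orthogonalProjectionOnto (m j) (L (e i α) (e k γ)) : 𝔤)‖ ^ 2 := by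
  refine Finset.sum_congr rfl fun α _ => ?_
  calc (∑ β, ‖(Submodule.orthogonalProjectionOnto (m k) (L (e i α) (e j β)) : 𝔤)‖ ^ 2)
      = ∑ β, ∑ γ, ⟪L (e i α) (e j β), e k γ⟫ ^ 2 :=
        Finset.sum_congr rfl fun β _ =>
          normsq_proj_basis (he_mem k) (he_span k) (he_on k) _
    _ = ∑ γ, ∑ β, ⟪L (e i α) (e k γ), e j β⟫ ^ 2 := by
        rw [Finset.sum_comm]
        refine Finset.sum_congr rfl fun γ _ => Finset.sum_congr rfl fun β _ => ?_
        rw [lswap L halt had (e i α) (e k γ) (e j β)]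
        ring
    _ = ∑ γ, ‖(Submodule.orthogonalProjectionOnto (m j) (L (e i α) (e k γ)) : 𝔤)‖ ^ 2 :=
        Finset.sum_congr rfl fun γ _ =>
          (normsq_proj_basis (he_mem j) (he_span j) (he_on j) _).symm

private lemma U_proj {𝔥 : Submodule ℝ 𝔤}
    (L : 𝔤 →ₗ[ℝ] 𝔤 →ₗ[ℝ] 𝔤) (halt : ∀ x : 𝔤, L x x = 0)
    (had : ∀ x y z : 𝔤, ⟪L x y, z⟫ + ⟪y, L x z⟫ = 0)
    (hm_le : ∀ i, m i ≤ 𝔥ᗮ)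
    (hm_orth : ∀ i j, i ≠ j → ∀ x ∈ m i, ∀ y ∈ m j, ⟪x, y⟫ = 0)
    (hlam : ∀ i, 0 < lam i)
    (U : 𝔤 → 𝔤 → 𝔤)
    (hU : ∀ x ∈ 𝔥ᗮ, ∀ y ∈ 𝔥ᗮ, ∀ z ∈ 𝔥ᗮ,
      2 * gmet m lam (U x y) z =
        gmet m lam ((Submodule.orthogonalProjectionOnto 𝔥ᗮ (L z x) : 𝔤)) y +
        gmet m lam ((Submodule.orthogonalProjectionOnto 𝔥ᗮ (L z y) : 𝔤)) x)
    {i j : Fin ℓ} {x y : 𝔤} (hx : x ∈ m i) (hy : y ∈ m j) (k : Fin ℓ) :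
    (Submodule.orthogonalProjectionOnto (m k) (U x y) : 𝔤)
      = ((lam j - lam i) / (2 * lam k)) • (Submodule.orthogonalProjectionOnto (m k) (L x y) : 𝔤) := by
  refine eq_orthogonalProjection_of_mem_of_inner_eq_zero
    (Submodule.smul_mem _ _ (Submodule.orthogonalProjectionOnto (m k) (L x y)).2) ?_
  intro w hw
  have h := hU x (hm_le i hx) y (hm_le j hy) w (hm_le k hw)
  rw [gmet_right_single hm_orth hw, gmet_right_single hm_orth hy,
    gmet_right_single hm_orth hx, inner_orthogonalProjection_left_eq_right,
    inner_orthogonalProjection_left_eq_right, projm_self (hm_le j hy),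
    projm_self (hm_le i hx), lcyc L halt had w x y, lcyc L halt had w y x,
    lanti L halt y x, inner_neg_left] at h
  rw [inner_sub_left, real_inner_smul_left, inner_orthogonalProjection_left_eq_right,
    projm_self hw]
  have hk := (hlam k).ne'
  field_simp
  linarith

private lemma U_diag_zero {𝔥 : Submodule ℝ 𝔤}
    (L : 𝔤 →ₗ[ℝ] 𝔤 →ₗ[ℝ] 𝔤) (halt : ∀ x : 𝔤, L x x = 0)
    (had : ∀ x y z : 𝔤, ⟪L x y, z⟫ + ⟪y, L x z⟫ = 0)
    (hm_le : ∀ i, m i ≤ 𝔥ᗮ)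
    (hm_orth : ∀ i j, i ≠ j → ∀ x ∈ m i, ∀ y ∈ m j, ⟪x, y⟫ = 0)
    (hm_span : (⨆ i, m i) = 𝔥ᗮ)
    (hlam : ∀ i, 0 < lam i)
    (U : 𝔤 → 𝔤 → 𝔤) (hUmem : ∀ x y, U x y ∈ 𝔥ᗮ)
    (hU : ∀ x ∈ 𝔥ᗮ, ∀ y ∈ 𝔥ᗮ, ∀ z ∈ 𝔥ᗮ,
      2 * gmet m lam (U x y) z =
        gmet m lam ((Submodule.orthogonalProjectionOnto 𝔥ᗮ (L z x) : 𝔤)) y +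
        gmet m lam ((Submodule.orthogonalProjectionOnto 𝔥ᗮ (L z y) : 𝔤)) x)
    {i : Fin ℓ} {x : 𝔤} (hx : x ∈ m i) : U x x = 0 := by
  have h := sum_proj_eq hm_orth hm_span (hUmem x x)
  rw [Finset.sum_congr rfl (fun k _ =>
    U_proj L halt had hm_le hm_orth hlam U hU hx hx k)] at h
  simpa using h.symm

private lemma K_formula {𝔥 : Submodule ℝ 𝔤}
    (L : 𝔤 →ₗ[ℝ] 𝔤 →ₗ[ℝ] 𝔤) (halt : ∀ x : 𝔤, L x x = 0)
    (had : ∀ x y z : 𝔤, ⟪L x y, z⟫ + ⟪y, L x z⟫ = 0)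
    (hm_le : ∀ i, m i ≤ 𝔥ᗮ)
    (hm_orth : ∀ i j, i ≠ j → ∀ x ∈ m i, ∀ y ∈ m j, ⟪x, y⟫ = 0)
    (hm_span : (⨆ i, m i) = 𝔥ᗮ)
    (hlam : ∀ i, 0 < lam i)
    (U : 𝔤 → 𝔤 → 𝔤) (hUmem : ∀ x y, U x y ∈ 𝔥ᗮ)
    (hU : ∀ x ∈ 𝔥ᗮ, ∀ y ∈ 𝔥ᗮ, ∀ z ∈ 𝔥ᗮ,
      2 * gmet m lam (U x y) z =
        gmet m lam ((Submodule.orthogonalProjectionOnto 𝔥ᗮ (L z x) : 𝔤)) y +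
        gmet m lam ((Submodule.orthogonalProjectionOnto 𝔥ᗮ (L z y) : 𝔤)) x)
    {i j : Fin ℓ} {X Y : 𝔤} (hX : X ∈ m i) (hY : Y ∈ m j) :
    Kcurv 𝔥 m lam L U i j X Y
      = (1/(2*lam i) + 1/(2*lam j)) * ‖(Submodule.orthogonalProjectionOnto 𝔥 (L X Y) : 𝔤)‖ ^ 2
        + ∑ k, (1/(2*lam i) + 1/(2*lam j) - (3/4) * (lam k/(lam i*lam j))
                + (lam j - lam i)^2/(4*(lam i*lam j*lam k)))
            * ‖(Submodule.orthogonalProjectionOnto (m k) (L X Y) : 𝔤)‖ ^ 2 := by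
  have hi := (hlam i).ne'
  have hj := (hlam j).ne'
  have Lsmul : ∀ (a b : ℝ) (x y : 𝔤), L (a•x) (b•y) = (a*b) • L x y := by
    intro a b x y
    rw [map_smul, show L (a • x) = a • L x from map_smul L a x, LinearMap.smul_apply,
      smul_smul, mul_comm]
  set si : ℝ := (Real.sqrt (lam i))⁻¹ with hsi
  set sj : ℝ := (Real.sqrt (lam j))⁻¹ with hsj
  have hsi2 : si * si = (lam i)⁻¹ := by
    rw [hsi, ← mul_inv, Real.mul_self_sqrt (hlam i).le]
  have hsj2 : sj * sj = (lam j)⁻¹ := by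
    rw [hsj, ← mul_inv, Real.mul_self_sqrt (hlam j).le]
  have hXt : si • X ∈ m i := Submodule.smul_mem _ _ hX
  have hYt : sj • Y ∈ m j := Submodule.smul_mem _ _ hY
  have hgsl : ∀ (a : ℝ) (u v : 𝔤), gmet m lam (a • u) v = a * gmet m lam u v := by
    intro a u v
    unfold gmet
    rw [Finset.mul_sum]
    refine Finset.sum_congr rfl fun k _ => ?_
    rw [map_smul]
    push_cast
    rw [real_inner_smul_left]
    ring
  have hgsr : ∀ (a : ℝ) (u v : 𝔤), gmet m lam u (a • v) = a * gmet m lam u v := by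
    intro a u v
    unfold gmet
    rw [Finset.mul_sum]
    refine Finset.sum_congr rfl fun k _ => ?_
    rw [map_smul]
    push_cast
    rw [real_inner_smul_right]
    ring
  -- term A
  have hA : gmet m lam (Submodule.orthogonalProjectionOnto 𝔥ᗮ (L (si • X) (sj • Y)) : 𝔤)
        (Submodule.orthogonalProjectionOnto 𝔥ᗮ (L (si • X) (sj • Y)) : 𝔤)
      = (lam i)⁻¹ * ((lam j)⁻¹
        * ∑ k, lam k * ‖(Submodule.orthogonalProjectionOnto (m k) (L X Y) : 𝔤)‖ ^ 2) := by
    rw [Lsmul, map_smul]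
    push_cast
    rw [hgsl, hgsr]
    have h3 : gmet m lam (Submodule.orthogonalProjectionOnto 𝔥ᗮ (L X Y) : 𝔤)
          (Submodule.orthogonalProjectionOnto 𝔥ᗮ (L X Y) : 𝔤)
        = ∑ k, lam k * ‖(Submodule.orthogonalProjectionOnto (m k) (L X Y) : 𝔤)‖ ^ 2 := by
      unfold gmet
      refine Finset.sum_congr rfl fun k _ => ?_
      rw [orthogonalProjection_orthogonalProjection_of_le (hm_le k),
        real_inner_self_eq_norm_sq]
    rw [h3]
    have hsc : (si*sj) * (si*sj) = (lam i)⁻¹ * (lam j)⁻¹ := by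
      rw [show (si*sj)*(si*sj) = (si*si)*(sj*sj) from by ring, hsi2, hsj2]
    linear_combination (∑ k, lam k * ‖(Submodule.orthogonalProjectionOnto (m k) (L X Y) : 𝔤)‖ ^ 2) * hsc
  -- term B
  have hB : gmet m lam
        (Submodule.orthogonalProjectionOnto 𝔥ᗮ (L (si • X) (L (si • X) (sj • Y))) : 𝔤) (sj • Y)
      = -((lam i)⁻¹ * (‖(Submodule.orthogonalProjectionOnto 𝔥 (L X Y) : 𝔤)‖ ^ 2
          + ∑ k, ‖(Submodule.orthogonalProjectionOnto (m k) (L X Y) : 𝔤)‖ ^ 2)) := by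
    have e1 : L (si • X) (L (si • X) (sj • Y)) = (si*(si*sj)) • L X (L X Y) := by
      rw [Lsmul, Lsmul]
    rw [e1, map_smul]
    push_cast
    rw [hgsl, gmet_right_single hm_orth hYt,
      inner_orthogonalProjection_left_eq_right, projm_self (hm_le j hYt),
      real_inner_smul_right]
    have e2 : ⟪L X (L X Y), Y⟫ = -(‖L X Y‖^2) := by
      have h := had X (L X Y) Y
      rw [real_inner_self_eq_norm_sq] at h
      linarith
    rw [e2, norm_sq_decomp hm_orth hm_le hm_span (L X Y)]
    have hsc : si*si*((sj*sj)*lam j) = (lam i)⁻¹ := by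
      rw [hsi2, hsj2, inv_mul_cancel₀ hj, mul_one]
    linear_combination (-(‖(Submodule.orthogonalProjectionOnto 𝔥 (L X Y) : 𝔤)‖ ^ 2
      + ∑ k, ‖(Submodule.orthogonalProjectionOnto (m k) (L X Y) : 𝔤)‖ ^ 2)) * hsc
  -- term C
  have hC : gmet m lam
        (Submodule.orthogonalProjectionOnto 𝔥ᗮ (L (sj • Y) (L (sj • Y) (si • X))) : 𝔤) (si • X)
      = -((lam j)⁻¹ * (‖(Submodule.orthogonalProjectionOnto 𝔥 (L X Y) : 𝔤)‖ ^ 2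
          + ∑ k, ‖(Submodule.orthogonalProjectionOnto (m k) (L X Y) : 𝔤)‖ ^ 2)) := by
    have e1 : L (sj • Y) (L (sj • Y) (si • X)) = (sj*(sj*si)) • L Y (L Y X) := by
      rw [Lsmul, Lsmul]
    rw [e1, map_smul]
    push_cast
    rw [hgsl, gmet_right_single hm_orth hXt,
      inner_orthogonalProjection_left_eq_right, projm_self (hm_le i hXt),
      real_inner_smul_right]
    have e2 : ⟪L Y (L Y X), X⟫ = -(‖L X Y‖^2) := by
      have h := had Y (L Y X) X
      have h2 : ⟪L Y X, L Y X⟫ = ‖L X Y‖^2 := by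
        rw [real_inner_self_eq_norm_sq, lanti L halt Y X, norm_neg]
      linarith
    rw [e2, norm_sq_decomp hm_orth hm_le hm_span (L X Y)]
    have hsc : sj*sj*((si*si)*lam i) = (lam j)⁻¹ := by
      rw [hsi2, hsj2, inv_mul_cancel₀ hi, mul_one]
    linear_combination (-(‖(Submodule.orthogonalProjectionOnto 𝔥 (L X Y) : 𝔤)‖ ^ 2
      + ∑ k, ‖(Submodule.orthogonalProjectionOnto (m k) (L X Y) : 𝔤)‖ ^ 2)) * hsc
  -- term D
  have hD : gmet m lam (U (si • X) (sj • Y)) (U (si • X) (sj • Y))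
      = ∑ k, (lam j - lam i)^2/(4*(lam i*lam j*lam k))
          * ‖(Submodule.orthogonalProjectionOnto (m k) (L X Y) : 𝔤)‖ ^ 2 := by
    unfold gmet
    refine Finset.sum_congr rfl fun k _ => ?_
    have hk := (hlam k).ne'
    rw [U_proj L halt had hm_le hm_orth hlam U hU hXt hYt k, Lsmul, map_smul]
    push_cast
    rw [real_inner_smul_left, real_inner_smul_right, real_inner_smul_left,
      real_inner_smul_right, real_inner_self_eq_norm_sq]
    have hsc : lam k * (((lam j - lam i) / (2 * lam k)) * ((si*sj)
          * (((lam j - lam i) / (2 * lam k)) * (si*sj))))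
        = (lam j - lam i)^2/(4*(lam i*lam j*lam k)) := by
      rw [show lam k * (((lam j - lam i) / (2 * lam k)) * ((si*sj)
          * (((lam j - lam i) / (2 * lam k)) * (si*sj))))
        = (si*si)*((sj*sj)*(lam k * (((lam j - lam i) / (2 * lam k))
            * ((lam j - lam i) / (2 * lam k))))) from by ring, hsi2, hsj2]
      field_simp
      ring
    linear_combination ‖(Submodule.orthogonalProjectionOnto (m k) (L X Y) : 𝔤)‖ ^ 2 * hsc
  -- term E
  have hE : gmet m lam (U (si • X) (si • X)) (U (sj • Y) (sj • Y)) = 0 := by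
    rw [U_diag_zero L halt had hm_le hm_orth hm_span hlam U hUmem hU hXt]
    unfold gmet
    refine Finset.sum_eq_zero fun k _ => ?_
    simp
  -- assemble
  simp only [Kcurv]
  rw [hA, hB, hC, hD, hE]
  have e1 : (∑ k, (1/(2*lam i) + 1/(2*lam j) - (3/4) * (lam k/(lam i*lam j))
                + (lam j - lam i)^2/(4*(lam i*lam j*lam k)))
            * ‖(Submodule.orthogonalProjectionOnto (m k) (L X Y) : 𝔤)‖ ^ 2)
      = -(3/4) * ((lam i)⁻¹ * ((lam j)⁻¹
            * ∑ k, lam k * ‖(Submodule.orthogonalProjectionOnto (m k) (L X Y) : 𝔤)‖ ^ 2))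
        + (1/2) * ((lam i)⁻¹ * ∑ k, ‖(Submodule.orthogonalProjectionOnto (m k) (L X Y) : 𝔤)‖ ^ 2)
        + (1/2) * ((lam j)⁻¹ * ∑ k, ‖(Submodule.orthogonalProjectionOnto (m k) (L X Y) : 𝔤)‖ ^ 2)
        + ∑ k, (lam j - lam i)^2/(4*(lam i*lam j*lam k))
            * ‖(Submodule.orthogonalProjectionOnto (m k) (L X Y) : 𝔤)‖ ^ 2 := by
    simp only [Finset.mul_sum]
    rw [← Finset.sum_add_distrib, ← Finset.sum_add_distrib, ← Finset.sum_add_distrib]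
    refine Finset.sum_congr rfl fun k _ => ?_
    have hk := (hlam k).ne'
    field_simp
    ring
  linear_combination -e1
end RicciAux

/-- With an adapted `Q`-orthonormal basis `(e_α)` of `m`, structure
constants `[ijk]`, Casimir constants `c_i` and the coefficients `b_i` defined by
`d_i b_i = 2 d_i c_i + Σ_{j,k} [ijk]`, the Ricci trace identity holds:
`Σ_j Σ_{e_α∈m_i, e_β∈m_j} K(e_α, e_β)
  = d_i b_i/(2λ_i) − (1/2) Σ_{j,k} [ijk] λ_k/(λ_i λ_j) + (1/4) Σ_{j,k} [ijk] λ_i/(λ_j λ_k)`. -/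
theorem ricci_trace_identity {ℓ : ℕ}
    -- 𝔤 is a real Lie algebra with bracket L …
    (L : 𝔤 →ₗ[ℝ] 𝔤 →ₗ[ℝ] 𝔤)
    (halt : ∀ x : 𝔤, L x x = 0)
    (hjac : ∀ x y z : 𝔤, L x (L y z) + L y (L z x) + L z (L x y) = 0)
    -- … whose inner product Q is ad-invariant
    (had : ∀ x y z : 𝔤, ⟪L x y, z⟫ + ⟪y, L x z⟫ = 0)
    -- 𝔥 ⊆ 𝔤 is a Lie subalgebra, m := 𝔥ᗮ
    (𝔥 : Submodule ℝ 𝔤) (h𝔥 : ∀ x ∈ 𝔥, ∀ y ∈ 𝔥, L x y ∈ 𝔥)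
    -- m = m_1 ⊕ ⋯ ⊕ m_ℓ, pairwise Q-orthogonal, with ⁅𝔥, m_i⁆ ⊆ m_i
    (m : Fin ℓ → Submodule ℝ 𝔤)
    (hm_le : ∀ i, m i ≤ 𝔥ᗮ)
    (hm_orth : ∀ i j, i ≠ j → ∀ x ∈ m i, ∀ y ∈ m j, ⟪x, y⟫ = 0)
    (hm_span : (⨆ i, m i) = 𝔥ᗮ)
    (hm_inv : ∀ i, ∀ h ∈ 𝔥, ∀ x ∈ m i, L h x ∈ m i)
    -- the positive coefficients λ_i
    (lam : Fin ℓ → ℝ) (hlam : ∀ i, 0 < lam i)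
    -- U is the symmetric bilinear map on m determined by
    -- 2 g(U(X,Y), Z) = g(⁅Z,X⁆_m, Y) + g(⁅Z,Y⁆_m, X) for all Z ∈ m
    (U : 𝔤 → 𝔤 → 𝔤)
    (hUmem : ∀ x y, U x y ∈ 𝔥ᗮ)
    (hUsymm : ∀ x y, U x y = U y x)
    (hU : ∀ x ∈ 𝔥ᗮ, ∀ y ∈ 𝔥ᗮ, ∀ z ∈ 𝔥ᗮ,
      2 * gmet m lam (U x y) z =
        gmet m lam ((Submodule.orthogonalProjectionOnto 𝔥ᗮ (L z x) : 𝔤)) y +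
        gmet m lam ((Submodule.orthogonalProjectionOnto 𝔥ᗮ (L z y) : 𝔤)) x)
    -- an adapted Q-orthonormal basis (e_α) of m: Q-orthonormal basis e i of each m_i,
    -- with d_i = dim m_i
    (d : Fin ℓ → ℕ) (hd : ∀ i, Module.finrank ℝ (m i) = d i)
    (e : ∀ i, Fin (d i) → 𝔤)
    (he_mem : ∀ i α, e i α ∈ m i)
    (he_span : ∀ i, Submodule.span ℝ (Set.range (e i)) = m i)
    (he_on : ∀ i (α β : Fin (d i)), ⟪e i α, e i β⟫ = if α = β then 1 else 0)
    -- the structure constants [ijk]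
    (T : Fin ℓ → Fin ℓ → Fin ℓ → ℝ)
    (hT : ∀ i j k, T i j k =
      ∑ α, ∑ β, ‖(Submodule.orthogonalProjectionOnto (m k) (L (e i α) (e j β)) : 𝔤)‖ ^ 2)
    -- the Casimir constants c_i ≥ 0
    (c : Fin ℓ → ℝ) (hc0 : ∀ i, 0 ≤ c i)
    (hc : ∀ i, (∑ α, ∑ β, ‖(Submodule.orthogonalProjectionOnto 𝔥 (L (e i α) (e i β)) : 𝔤)‖ ^ 2)
      = (d i : ℝ) * c i)
    -- the coefficients b_i defined by d_i b_i = 2 d_i c_i + Σ_{j,k} [ijk]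
    (b : Fin ℓ → ℝ)
    (hb : ∀ i, (d i : ℝ) * b i = 2 * (d i : ℝ) * c i + ∑ j, ∑ k, T i j k) :
    ∀ i, (∑ j, ∑ α, ∑ β, Kcurv 𝔥 m lam L U i j (e i α) (e j β))
      = (d i : ℝ) * b i / (2 * lam i)
        - (1 / 2) * ∑ j, ∑ k, T i j k * (lam k / (lam i * lam j))
        + (1 / 4) * ∑ j, ∑ k, T i j k * (lam i / (lam j * lam k)) := by
  
  intro i
  have hi := (hlam i).ne'
  -- brackets between different m's have no 𝔥-component
  have hzero : ∀ j, j ≠ i → ∀ (α : Fin (d i)) (β : Fin (d j)),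
      (Submodule.orthogonalProjectionOnto 𝔥 (L (e i α) (e j β)) : 𝔤) = 0 := by
    intro j hji α β
    refine proj_zero_of_orth fun w hw => ?_
    rw [real_inner_comm, lcyc L halt had (e i α) (e j β) w,
      lcyc L halt had (e j β) w (e i α)]
    exact hm_orth i j (Ne.symm hji) _ (hm_inv i w hw _ (he_mem i α)) _ (he_mem j β)
  have hcas : ∀ j, (∑ α, ∑ β, ‖(Submodule.orthogonalProjectionOnto 𝔥 (L (e i α) (e j β)) : 𝔤)‖ ^ 2)
      = if j = i then (d i : ℝ) * c i else 0 := by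
    intro j
    by_cases hji : j = i
    · subst hji; rw [if_pos rfl]; exact hc j
    · rw [if_neg hji]
      refine Finset.sum_eq_zero fun α _ => Finset.sum_eq_zero fun β _ => ?_
      rw [hzero j hji α β]; simp
  have hTs : ∀ j k, T i j k = T i k j := by
    intro j k
    rw [hT i j k, hT i k j]
    exact Tsymm_aux L halt had d e he_mem he_span he_on i j k
  -- step 1: reduce to scalar double sums
  have step1 : (∑ j, ∑ α, ∑ β, Kcurv 𝔥 m lam L U i j (e i α) (e j β))
      = ∑ j, ((1/(2*lam i) + 1/(2*lam j)) * (if j = i then (d i : ℝ) * c i else 0)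
          + ∑ k, (1/(2*lam i) + 1/(2*lam j) - (3/4) * (lam k/(lam i*lam j))
                  + (lam j - lam i)^2/(4*(lam i*lam j*lam k))) * T i j k) := by
    refine Finset.sum_congr rfl fun j _ => ?_
    rw [Finset.sum_congr rfl fun α _ => Finset.sum_congr rfl fun β _ => K_formula L halt had hm_le hm_orth hm_span hlam U hUmem hU (he_mem i α) (he_mem j β)]
    rw [Finset.sum_congr rfl fun α (_ : α ∈ Finset.univ) => Finset.sum_add_distrib,
      Finset.sum_add_distrib]
    congr 1
    · rw [← hcas j]
      simp only [Finset.mul_sum]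
    · calc (∑ α, ∑ β, ∑ k, (1/(2*lam i) + 1/(2*lam j) - (3/4) * (lam k/(lam i*lam j))
                  + (lam j - lam i)^2/(4*(lam i*lam j*lam k)))
              * ‖(Submodule.orthogonalProjectionOnto (m k) (L (e i α) (e j β)) : 𝔤)‖ ^ 2)
          = ∑ k, ∑ α, ∑ β, (1/(2*lam i) + 1/(2*lam j) - (3/4) * (lam k/(lam i*lam j))
                  + (lam j - lam i)^2/(4*(lam i*lam j*lam k)))
              * ‖(Submodule.orthogonalProjectionOnto (m k) (L (e i α) (e j β)) : 𝔤)‖ ^ 2 := by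
            rw [Finset.sum_congr rfl fun α (_ : α ∈ Finset.univ) => Finset.sum_comm]
            exact Finset.sum_comm
        _ = _ := by
            refine Finset.sum_congr rfl fun k _ => ?_
            rw [hT i j k]
            simp only [Finset.mul_sum]
  rw [step1, Finset.sum_add_distrib]
  -- the 𝔥-part collapses to the j = i term
  have hcoll : (∑ j, (1/(2*lam i) + 1/(2*lam j)) * (if j = i then (d i : ℝ) * c i else 0))
      = (1/(2*lam i) + 1/(2*lam i)) * ((d i : ℝ) * c i) := by
    rw [Finset.sum_congr rfl fun j (_ : j ∈ Finset.univ) =>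
      (by by_cases h : j = i <;> simp [h] :
        (1/(2*lam i) + 1/(2*lam j)) * (if j = i then (d i : ℝ) * c i else 0)
          = if j = i then (1/(2*lam i) + 1/(2*lam i)) * ((d i : ℝ) * c i) else 0)]
    rw [Finset.sum_ite_eq' Finset.univ i]
    simp
  rw [hcoll]
  -- symmetrization of the T-part
  have hsym : ∀ (F : Fin ℓ → Fin ℓ → ℝ),
      (∑ j, ∑ k, F k j * T i j k) = ∑ j, ∑ k, F j k * T i j k := by
    intro F
    rw [Finset.sum_comm]
    exact Finset.sum_congr rfl fun j _ => Finset.sum_congr rfl fun k _ => by rw [hTs j k]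
  have h2 : (∑ j, ∑ k, (1/(2*lam i) + 1/(2*lam j) - (3/4) * (lam k/(lam i*lam j))
          + (lam j - lam i)^2/(4*(lam i*lam j*lam k))) * T i j k)
      = ∑ j, ∑ k, (1/(2*lam i) - (1/2) * (lam k/(lam i*lam j))
          + (1/4) * (lam i/(lam j*lam k))) * T i j k := by
    have e1 : (∑ j, ∑ k, (1/(2*lam i) + 1/(2*lam k) - (3/4) * (lam j/(lam i*lam k))
            + (lam k - lam i)^2/(4*(lam i*lam k*lam j))) * T i j k)
        = ∑ j, ∑ k, (1/(2*lam i) + 1/(2*lam j) - (3/4) * (lam k/(lam i*lam j))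
            + (lam j - lam i)^2/(4*(lam i*lam j*lam k))) * T i j k :=
      hsym fun j k => (1/(2*lam i) + 1/(2*lam j) - (3/4) * (lam k/(lam i*lam j))
          + (lam j - lam i)^2/(4*(lam i*lam j*lam k)))
    have e2 : (∑ j, ∑ k, (1/(2*lam i) - (1/2) * (lam j/(lam i*lam k))
            + (1/4) * (lam i/(lam k*lam j))) * T i j k)
        = ∑ j, ∑ k, (1/(2*lam i) - (1/2) * (lam k/(lam i*lam j))
            + (1/4) * (lam i/(lam j*lam k))) * T i j k :=
      hsym fun j k => (1/(2*lam i) - (1/2) * (lam k/(lam i*lam j))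
          + (1/4) * (lam i/(lam j*lam k)))
    have e3 : (∑ j, ∑ k, ((1/(2*lam i) + 1/(2*lam j) - (3/4) * (lam k/(lam i*lam j))
            + (lam j - lam i)^2/(4*(lam i*lam j*lam k))) * T i j k
          + (1/(2*lam i) + 1/(2*lam k) - (3/4) * (lam j/(lam i*lam k))
            + (lam k - lam i)^2/(4*(lam i*lam k*lam j))) * T i j k))
        = ∑ j, ∑ k, ((1/(2*lam i) - (1/2) * (lam k/(lam i*lam j))
            + (1/4) * (lam i/(lam j*lam k))) * T i j k
          + (1/(2*lam i) - (1/2) * (lam j/(lam i*lam k))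
            + (1/4) * (lam i/(lam k*lam j))) * T i j k) := by
      refine Finset.sum_congr rfl fun j _ => Finset.sum_congr rfl fun k _ => ?_
      have hj := (hlam j).ne'
      have hk := (hlam k).ne'
      have hco : (1/(2*lam i) + 1/(2*lam j) - (3/4) * (lam k/(lam i*lam j))
            + (lam j - lam i)^2/(4*(lam i*lam j*lam k)))
          + (1/(2*lam i) + 1/(2*lam k) - (3/4) * (lam j/(lam i*lam k))
            + (lam k - lam i)^2/(4*(lam i*lam k*lam j)))
          = (1/(2*lam i) - (1/2) * (lam k/(lam i*lam j))
            + (1/4) * (lam i/(lam j*lam k)))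
          + (1/(2*lam i) - (1/2) * (lam j/(lam i*lam k))
            + (1/4) * (lam i/(lam k*lam j))) := by
        field_simp
        ring
      linear_combination T i j k * hco
    simp only [Finset.sum_add_distrib] at e3
    linarith [e1, e2, e3]
  rw [h2]
  -- expand and finish with hb
  have h3 : (∑ j, ∑ k, (1/(2*lam i) - (1/2) * (lam k/(lam i*lam j))
          + (1/4) * (lam i/(lam j*lam k))) * T i j k)
      = (1/(2*lam i)) * (∑ j, ∑ k, T i j k)
        - (1/2) * (∑ j, ∑ k, T i j k * (lam k/(lam i*lam j)))
        + (1/4) * (∑ j, ∑ k, T i j k * (lam i/(lam j*lam k))) := by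
    simp only [Finset.mul_sum]
    rw [← Finset.sum_sub_distrib, ← Finset.sum_add_distrib]
    refine Finset.sum_congr rfl fun j _ => ?_
    rw [← Finset.sum_sub_distrib, ← Finset.sum_add_distrib]
    refine Finset.sum_congr rfl fun k _ => ?_
    ring
  rw [h3]
  linear_combination (-1/(2*lam i)) * hb i
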